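/- Let w ≠ 0, a > 0, b ∈ ℝ and ε ∈ {1, −1}. On the open set U = {(ρ,z) ∈ ℝ² : ρ > 0 and sin(ε a ln ρ + b) > 0}, define η(ρ) = ρ (|w|/a) sin(ε a ln ρ + b), σ = ln(η/ρ²), and ω(ρ,z) = w z. Then (σ, ω) satisfies the reduced vacuum Einstein equations Δσ = −e^{−2σ}(ω_ρ² + ω_z²)/ρ⁴ and Δω = 4ω_ρ/ρ + 2(ω_ρσ_ρ + ω_zσ_z) on U. -/

import Mathlib

/-- Partial derivative with respect to the first (ρ) variable. -/
noncomputable def pdr (f : ℝ × ℝ → ℝ) (p : ℝ × ℝ) : ℝ :=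
  deriv (fun x => f (x, p.2)) p.1

/-- Partial derivative with respect to the second (z) variable. -/
noncomputable def pdz (f : ℝ × ℝ → ℝ) (p : ℝ × ℝ) : ℝ :=
  deriv (fun y => f (p.1, y)) p.2

/-- The flat cylindrically symmetric Laplacian Δ = ∂²_ρ + (1/ρ)∂_ρ + ∂²_z. -/
noncomputable def lap (f : ℝ × ℝ → ℝ) (p : ℝ × ℝ) : ℝ :=
  pdr (pdr f) p + pdr f p / p.1 + pdz (pdz f) p

/-- the Lewis family (I±), with η = ρ(|w|/a)sin(±a ln ρ + b) and
ω = wz, satisfies the reduced vacuum Einstein equations on the open set where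
ρ > 0 and sin(±a ln ρ + b) > 0. -/
theorem lewis_I_solves_reduced_einstein
    (w a b ε : ℝ) (hw : w ≠ 0) (ha : 0 < a) (hε : ε = 1 ∨ ε = -1)
    (η σ ω : ℝ × ℝ → ℝ)
    (hη : ∀ p : ℝ × ℝ, η p = p.1 * (|w| / a) * Real.sin (ε * a * Real.log p.1 + b))
    (hσ : ∀ p : ℝ × ℝ, σ p = Real.log (η p / p.1 ^ 2))
    (hω : ∀ p : ℝ × ℝ, ω p = w * p.2) :
    ∀ p : ℝ × ℝ, 0 < p.1 → 0 < Real.sin (ε * a * Real.log p.1 + b) →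
      lap σ p = - Real.exp (-2 * σ p) * ((pdr ω p) ^ 2 + (pdz ω p) ^ 2) / p.1 ^ 4
      ∧ lap ω p = 4 * pdr ω p / p.1
          + 2 * (pdr ω p * pdr σ p + pdz ω p * pdz σ p) := by
  have habs : 0 < |w| := abs_pos.mpr hw
  set k := ε * a with hk
  have hk2 : k ^ 2 = a ^ 2 := by rcases hε with rfl | rfl <;> simp [hk]
  set c := |w| / a with hc
  have hcpos : 0 < c := div_pos habs ha
  clear_value k c
  set g : ℝ → ℝ := fun x => Real.log (c * Real.sin (k * Real.log x + b) / x) with hgdef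
  have hσg : ∀ q : ℝ × ℝ, σ q = g q.1 := by
    intro q
    rw [hσ q, hη q, hgdef]
    rcases eq_or_ne q.1 0 with h0 | h0
    · simp [h0]
    · congr 1
      field_simp
  have hpdrω : ∀ q : ℝ × ℝ, pdr ω q = 0 := by
    intro q
    have h1 : (fun x => ω (x, q.2)) = fun _ => w * q.2 := funext fun x => hω (x, q.2)
    rw [pdr, h1, deriv_const]
  have hpdzω : ∀ q : ℝ × ℝ, pdz ω q = w := by
    intro q
    have h1 : (fun y => ω (q.1, y)) = fun y => w * y := funext fun y => hω (q.1, y)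
    rw [pdz, h1]
    simpa using ((hasDerivAt_id q.2).const_mul w).deriv
  have hpdzσ : ∀ q : ℝ × ℝ, pdz σ q = 0 := by
    intro q
    have h1 : (fun y => σ (q.1, y)) = fun _ => g q.1 := funext fun y => hσg (q.1, y)
    rw [pdz, h1, deriv_const]
  have hpdrσ : ∀ q : ℝ × ℝ, pdr σ q = deriv g q.1 := by
    intro q
    have h1 : (fun x => σ (x, q.2)) = g := funext fun x => hσg (x, q.2)
    rw [pdr, h1]
  have hθ : ∀ x : ℝ, x ≠ 0 → HasDerivAt (fun y => k * Real.log y + b) (k * x⁻¹) x :=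
    fun x hx => ((Real.hasDerivAt_log hx).const_mul k).add_const b
  have hgderiv : ∀ x : ℝ, 0 < x → 0 < Real.sin (k * Real.log x + b) →
      HasDerivAt g ((k * Real.cos (k * Real.log x + b) - Real.sin (k * Real.log x + b)) /
        (x * Real.sin (k * Real.log x + b))) x := by
    intro x hx hsx
    have hθx := hθ x hx.ne'
    have hsin : HasDerivAt (fun y => Real.sin (k * Real.log y + b))
        (Real.cos (k * Real.log x + b) * (k * x⁻¹)) x :=
      (Real.hasDerivAt_sin _).comp x hθx
    have hnum := hsin.const_mul c
    have hh := hnum.div (hasDerivAt_id x) hx.ne'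
    have hne : c * Real.sin (k * Real.log x + b) / x ≠ 0 :=
      (div_pos (mul_pos hcpos hsx) hx).ne'
    have key := hh.log hne
    convert key using 1
    field_simp
    · exact hgdef
    · simp only [Pi.div_apply, id]
      field_simp
  intro p hρ hs
  set φ : ℝ → ℝ := fun x =>
    (k * Real.cos (k * Real.log x + b) - Real.sin (k * Real.log x + b)) /
      (x * Real.sin (k * Real.log x + b)) with hφdef
  have hcont : ContinuousAt (fun x => Real.sin (k * Real.log x + b)) p.1 :=
    Real.continuous_sin.continuousAt.comp
      (((Real.continuousAt_log hρ.ne').const_mul k).add continuousAt_const)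
  have hev : ∀ᶠ x in nhds p.1, 0 < x ∧ 0 < Real.sin (k * Real.log x + b) :=
    (eventually_gt_nhds hρ).and (hcont (Ioi_mem_nhds hs))
  have hEq : deriv g =ᶠ[nhds p.1] φ := hev.mono fun x hx => (hgderiv x hx.1 hx.2).deriv
  have hd2 : deriv (deriv g) p.1 = deriv φ p.1 := hEq.deriv_eq
  -- derivative of φ at p.1
  have hθρ := hθ p.1 hρ.ne'
  have hsinρ : HasDerivAt (fun y => Real.sin (k * Real.log y + b))
      (Real.cos (k * Real.log p.1 + b) * (k * p.1⁻¹)) p.1 :=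
    (Real.hasDerivAt_sin _).comp p.1 hθρ
  have hcosρ : HasDerivAt (fun y => Real.cos (k * Real.log y + b))
      (-Real.sin (k * Real.log p.1 + b) * (k * p.1⁻¹)) p.1 :=
    (Real.hasDerivAt_cos _).comp p.1 hθρ
  have hN := (hcosρ.const_mul k).sub hsinρ
  have hD := (hasDerivAt_id p.1).mul hsinρ
  have hDne : p.1 * Real.sin (k * Real.log p.1 + b) ≠ 0 := (mul_pos hρ hs).ne'
  have hφ' : HasDerivAt φ
      (((k * (-Real.sin (k * Real.log p.1 + b) * (k * p.1⁻¹)) -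
            Real.cos (k * Real.log p.1 + b) * (k * p.1⁻¹)) *
          (p.1 * Real.sin (k * Real.log p.1 + b)) -
        (k * Real.cos (k * Real.log p.1 + b) - Real.sin (k * Real.log p.1 + b)) *
          (1 * Real.sin (k * Real.log p.1 + b) +
            p.1 * (Real.cos (k * Real.log p.1 + b) * (k * p.1⁻¹)))) /
        (p.1 * Real.sin (k * Real.log p.1 + b)) ^ 2) p.1 := hN.div hD hDne
  have hφderiv := hφ'.deriv
  have hgρ := (hgderiv p.1 hρ hs).deriv
  have hlapσ : lap σ p = deriv φ p.1 + deriv g p.1 / p.1 := by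
    rw [lap]
    have h1 : pdr σ = fun q => deriv g q.1 := funext hpdrσ
    have h2 : pdz σ = fun _ => (0:ℝ) := funext hpdzσ
    have h3 : pdr (pdr σ) p = deriv (deriv g) p.1 := by rw [h1]; rfl
    have h4 : pdz (pdz σ) p = 0 := by rw [h2, pdz]; exact deriv_const _ _
    rw [h3, h4, hpdrσ p, hd2]
    ring
  have hS1 : Real.sin (k * Real.log p.1 + b) ^ 2 + Real.cos (k * Real.log p.1 + b) ^ 2 = 1 :=
    Real.sin_sq_add_cos_sq _
  have key : deriv φ p.1 + deriv g p.1 / p.1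
      = -(k ^ 2) / (p.1 ^ 2 * Real.sin (k * Real.log p.1 + b) ^ 2) := by
    rw [hφderiv, hgρ]
    field_simp
    linear_combination (-(k ^ 2)) * hS1
  constructor
  · rw [hlapσ, key, hpdrω p, hpdzω p, hσg p, hgdef]
    have ht : (0:ℝ) < c * Real.sin (k * Real.log p.1 + b) / p.1 :=
      div_pos (mul_pos hcpos hs) hρ
    have hE : Real.exp (-2 * Real.log (c * Real.sin (k * Real.log p.1 + b) / p.1))
        = ((c * Real.sin (k * Real.log p.1 + b) / p.1) ^ 2)⁻¹ := by
      rw [show (-2 : ℝ) * Real.log (c * Real.sin (k * Real.log p.1 + b) / p.1)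
          = Real.log (((c * Real.sin (k * Real.log p.1 + b) / p.1) ^ 2)⁻¹) by
        rw [Real.log_inv, Real.log_pow]; push_cast; ring]
      exact Real.exp_log (by positivity)
    rw [hE]
    have hcw : c ^ 2 * a ^ 2 = w ^ 2 := by rw [hc]; field_simp; exact sq_abs w
    have hwk : c ^ 2 * k ^ 2 = w ^ 2 := by rw [hk2]; exact hcw
    field_simp
    linear_combination (-1) * hwk
  · rw [lap]
    have h1 : pdr ω = fun _ : ℝ × ℝ => (0:ℝ) := funext hpdrω
    have h2 : pdz ω = fun _ : ℝ × ℝ => w := funext hpdzω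
    rw [hpdrω p, hpdzω p, h1, h2]
    have h3 : pdr (fun _ : ℝ × ℝ => (0:ℝ)) p = 0 := by rw [pdr, deriv_const]
    have h4 : pdz (fun _ : ℝ × ℝ => w) p = 0 := by rw [pdz, deriv_const]
    rw [h3, h4, hpdzσ p]
    ring
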